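/- (Monomial Coupling.) Let N ≥ 1 and let x, y, x', y' ∈ ℝ^N. If Σ_{n=1}^N x_n^{l−k} y_n^k = Σ_{n=1}^N (x'_n)^{l−k} (y'_n)^k for every l ∈ {1,…,N} and every integer k with 0 ≤ k ≤ l, then there exists a single permutation σ of {1,…,N} such that x_n = x'_{σ(n)} and y_n = y'_{σ(n)} for all n ∈ {1,…,N}. -/

import Mathlib

open Finset Polynomial

lemma mc_aeval_psum (N : ℕ) (v : Fin N → ℝ) (k : ℕ) :
    MvPolynomial.aeval v (MvPolynomial.psum (Fin N) ℝ k) = ∑ n, v n ^ k := by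
  simp [MvPolynomial.psum]

lemma mc_newton (N : ℕ) (v : Fin N → ℝ) (k : ℕ) (hk : 0 < k) :
    ∑ n, v n ^ k = (-1 : ℝ) ^ (k + 1) * k * (Multiset.map v Finset.univ.val).esymm k -
      ∑ a ∈ (Finset.HasAntidiagonal.antidiagonal k).filter (fun a => a.1 ∈ Set.Ioo 0 k),
        (-1 : ℝ) ^ a.1 * (Multiset.map v Finset.univ.val).esymm a.1 * ∑ n, v n ^ a.2 := by
  have H := congrArg (MvPolynomial.aeval v)
    (MvPolynomial.psum_eq_mul_esymm_sub_sum (Fin N) ℝ k hk)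
  simp only [map_sub, map_mul, map_pow, map_neg, map_one, map_natCast, map_sum,
    MvPolynomial.aeval_esymm_eq_multiset_esymm, mc_aeval_psum] at H
  exact H

lemma mc_powersum_ext (N : ℕ) (u u' : Fin N → ℝ)
    (h : ∀ l ∈ Finset.Icc 1 N, ∑ n, u n ^ l = ∑ n, u' n ^ l) :
    Multiset.map u Finset.univ.val = Multiset.map u' Finset.univ.val := by
  set s := Multiset.map u Finset.univ.val with hs
  set s' := Multiset.map u' Finset.univ.val with hs'
  have hcard : Multiset.card s = N := by simp [hs]
  have hcard' : Multiset.card s' = N := by simp [hs']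
  -- elementary symmetric functions agree
  have he : ∀ k ≤ N, s.esymm k = s'.esymm k := by
    intro k hkN
    induction k using Nat.strong_induction_on with
    | _ k ih =>
      rcases Nat.eq_zero_or_pos k with rfl | hk
      · simp [Multiset.esymm]
      · have H := mc_newton N u k hk
        have H' := mc_newton N u' k hk
        rw [← hs] at H; rw [← hs'] at H'
        have hsum : ∑ a ∈ (Finset.HasAntidiagonal.antidiagonal k).filter (fun a => a.1 ∈ Set.Ioo 0 k),
              (-1 : ℝ) ^ a.1 * s.esymm a.1 * ∑ n, u n ^ a.2
            = ∑ a ∈ (Finset.HasAntidiagonal.antidiagonal k).filter (fun a => a.1 ∈ Set.Ioo 0 k),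
              (-1 : ℝ) ^ a.1 * s'.esymm a.1 * ∑ n, u' n ^ a.2 := by
          refine Finset.sum_congr rfl fun a ha => ?_
          simp only [Finset.mem_filter, Finset.HasAntidiagonal.mem_antidiagonal, Set.mem_Ioo] at ha
          have h1 : a.1 < k := ha.2.2
          have h2 : 1 ≤ a.2 := by omega
          have h3 : a.2 ≤ N := by omega
          rw [ih a.1 h1 (by omega), h a.2 (Finset.mem_Icc.mpr ⟨h2, h3⟩)]
        have hP : ∑ n, u n ^ k = ∑ n, u' n ^ k := h k (Finset.mem_Icc.mpr ⟨hk, hkN⟩)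
        have key : (-1 : ℝ) ^ (k + 1) * k * s.esymm k
            = (-1 : ℝ) ^ (k + 1) * k * s'.esymm k := by
          have := H.symm.trans (hP.trans H')
          rw [hsum] at this
          linarith [this]
        have hne : ((-1 : ℝ) ^ (k + 1) * k) ≠ 0 := by
          apply mul_ne_zero
          · exact pow_ne_zero _ (by norm_num)
          · exact_mod_cast hk.ne'
        exact mul_left_cancel₀ hne key
  -- polynomials with these roots agree
  have hpoly : (s.map fun r => X - C r).prod = (s'.map fun r => X - C r).prod := by
    apply Polynomial.ext
    intro k
    rcases le_or_gt k N with hkN | hkN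
    · rw [Multiset.prod_X_sub_C_coeff s (by omega), Multiset.prod_X_sub_C_coeff s' (by omega),
        hcard, hcard', he (N - k) (by omega)]
    · rw [Polynomial.coeff_eq_zero_of_natDegree_lt, Polynomial.coeff_eq_zero_of_natDegree_lt]
      · rw [Polynomial.natDegree_multiset_prod_X_sub_C_eq_card, hcard']; exact hkN
      · rw [Polynomial.natDegree_multiset_prod_X_sub_C_eq_card, hcard]; exact hkN
  have := congrArg Polynomial.roots hpoly
  rwa [Polynomial.roots_multiset_prod_X_sub_C, Polynomial.roots_multiset_prod_X_sub_C] at this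

lemma mc_map_injOn {α β : Type*} [DecidableEq α] [DecidableEq β] (f : α → β) (S : Set α)
    (hf : Set.InjOn f S) :
    ∀ M M' : Multiset α, (∀ a ∈ M, a ∈ S) → (∀ a ∈ M', a ∈ S) →
      M.map f = M'.map f → M = M' := by
  intro M
  induction M using Multiset.induction_on with
  | empty =>
    intro M' _ _ hmap
    simp only [Multiset.map_zero] at hmap
    exact (Multiset.map_eq_zero.mp hmap.symm).symm
  | cons a M ih =>
    intro M' hM hM' hmap
    have hfa : f a ∈ M'.map f := by
      rw [← hmap]; exact Multiset.mem_map_of_mem f (Multiset.mem_cons_self a M)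
    obtain ⟨b, hb, hfb⟩ := Multiset.mem_map.mp hfa
    have hba : b = a := hf (hM' b hb) (hM a (Multiset.mem_cons_self a M)) hfb
    subst hba
    have hM'eq : M' = b ::ₘ M'.erase b := (Multiset.cons_erase hb).symm
    rw [hM'eq, Multiset.map_cons, Multiset.map_cons] at hmap
    have := ih (M'.erase b) (fun a ha => hM a (Multiset.mem_cons_of_mem ha))
      (fun a ha => hM' a (Multiset.mem_of_mem_erase ha))
      ((Multiset.cons_inj_right _).mp hmap)
    rw [hM'eq, this]

lemma mc_exists_perm {N : ℕ} {α : Type*} (f g : Fin N → α)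
    (h : Multiset.map f Finset.univ.val = Multiset.map g Finset.univ.val) :
    ∃ σ : Equiv.Perm (Fin N), ∀ n, f n = g (σ n) := by
  classical
  have hcard : ∀ p : α, Fintype.card {n // f n = p} = Fintype.card {n // g n = p} := by
    intro p
    have hc := congrArg (Multiset.count p) h
    rw [Multiset.count_map, Multiset.count_map] at hc
    rw [Fintype.card_subtype, Fintype.card_subtype]
    simpa [Finset.card, Finset.filter, eq_comm] using hc
  let e : ∀ p : α, {n // f n = p} ≃ {n // g n = p} := fun p => Fintype.equivOfCardEq (hcard p)
  refine ⟨(Equiv.sigmaFiberEquiv f).symm.trans ((Equiv.sigmaCongrRight e).trans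
    (Equiv.sigmaFiberEquiv g)), fun n => ?_⟩
  exact ((e (f n)) ⟨n, rfl⟩).2.symm


/-- Monomial Coupling: if all bivariate power sums
`∑_n x_n^{l−k} y_n^k` (for `1 ≤ l ≤ N`, `0 ≤ k ≤ l`) of `(x, y)` and
`(x', y')` agree, then the multisets of pairs `{(x_n, y_n)}` and
`{(x'_n, y'_n)}` coincide. -/
theorem monomial_coupling (N : ℕ) (hN : 1 ≤ N) (x y x' y' : Fin N → ℝ)
    (h : ∀ l ∈ Finset.Icc 1 N, ∀ k ≤ l,
      ∑ n, x n ^ (l - k) * y n ^ k = ∑ n, x' n ^ (l - k) * y' n ^ k) :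
    ∃ σ : Equiv.Perm (Fin N), ∀ n, x n = x' (σ n) ∧ y n = y' (σ n) := by
    classical
  set f : Fin N → ℝ × ℝ := fun n => (x n, y n) with hf
  set g : Fin N → ℝ × ℝ := fun n => (x' n, y' n) with hg
  set S : Finset (ℝ × ℝ) := Finset.image f Finset.univ ∪ Finset.image g Finset.univ with hS
  set bad : Finset ℝ := (S ×ˢ S).image (fun pq => (pq.2.1 - pq.1.1) / (pq.1.2 - pq.2.2)) with hbad
  obtain ⟨t, ht⟩ := Infinite.exists_notMem_finset bad
  -- binomial expansion of projected power sums
  have expand : ∀ (u v : Fin N → ℝ) (l : ℕ),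
      ∑ n, (u n + t * v n) ^ l
        = ∑ k ∈ Finset.range (l + 1), (t ^ k * l.choose k) * ∑ n, u n ^ (l - k) * v n ^ k := by
    intro u v l
    simp_rw [add_comm (u _) (t * v _), add_pow, mul_pow, Finset.mul_sum]
    rw [Finset.sum_comm]
    exact Finset.sum_congr rfl fun k _ => Finset.sum_congr rfl fun n _ => by ring
  have hproj : Multiset.map (fun n => x n + t * y n) Finset.univ.val
      = Multiset.map (fun n => x' n + t * y' n) Finset.univ.val := by
    apply mc_powersum_ext
    intro l hl
    rw [expand, expand]
    refine Finset.sum_congr rfl fun k hk => ?_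
    rw [h l hl k (Nat.lt_succ_iff.mp (Finset.mem_range.mp hk))]
  -- injectivity of the projection on S
  have hinj : Set.InjOn (fun p : ℝ × ℝ => p.1 + t * p.2) (↑S : Set (ℝ × ℝ)) := by
    intro p hp q hq hpq
    simp only at hpq
    by_cases h2 : p.2 = q.2
    · have : p.1 = q.1 := by rw [h2] at hpq; linarith
      exact Prod.ext this h2
    · exfalso
      apply ht
      rw [hbad]
      apply Finset.mem_image.mpr
      refine ⟨(p, q), Finset.mem_product.mpr ⟨hp, hq⟩, ?_⟩
      have hne : p.2 - q.2 ≠ 0 := sub_ne_zero.mpr h2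
      field_simp
      linarith
  -- multiset of pairs agree
  have hpairs : Multiset.map f Finset.univ.val = Multiset.map g Finset.univ.val := by
    apply mc_map_injOn (fun p : ℝ × ℝ => p.1 + t * p.2) (↑S) hinj
    · intro a ha
      obtain ⟨n, _, rfl⟩ := Multiset.mem_map.mp ha
      exact Finset.mem_coe.mpr (Finset.mem_union_left _ (Finset.mem_image_of_mem f (Finset.mem_univ n)))
    · intro a ha
      obtain ⟨n, _, rfl⟩ := Multiset.mem_map.mp ha
      exact Finset.mem_coe.mpr (Finset.mem_union_right _ (Finset.mem_image_of_mem g (Finset.mem_univ n)))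
    · rw [Multiset.map_map, Multiset.map_map]
      exact hproj
  obtain ⟨σ, hσ⟩ := mc_exists_perm f g hpairs
  exact ⟨σ, fun n => ⟨congrArg Prod.fst (hσ n), congrArg Prod.snd (hσ n)⟩⟩
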